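/- arXiv:1502.06793 — 3 statements merged into one kernel-verified Lean document; each statement's English description precedes it below -/
import Mathlib

section
/- Let σ > 0, let v : ℝ³ → ℝ³ be a continuously differentiable vector field, let T > 0, and let s : [0,T] → ℝ³ be continuously differentiable. Define the Onsager–Machlup functionals L(x,y) = ‖y − v(x)‖²/(2σ²) + (1/2)(div v)(x) and L'(x,y) = ‖y + v(x)‖²/(2σ²) − (1/2)(div v)(x) (the functional for the negated drift field −v), and the reversed path s'(t) = s(T − t). Then ∫₀ᵀ L'(s'(t), (d/dt)s'(t)) dt = ∫₀ᵀ L(s(t), (d/dt)s(t)) dt − ∫₀ᵀ (div v)(s(t)) dt; in particular the two actions differ exactly by the integral of the divergence of v along the path. -/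
open MeasureTheory intervalIntegral

noncomputable section

/-- The spatial state space `ℝ³`. -/
abbrev E3 : Type := EuclideanSpace ℝ (Fin 3)

/-- The divergence `div v = ∑ⱼ ∂vⱼ/∂xⱼ` of a vector field `v : ℝ³ → ℝ³`. -/
def div3 (v : E3 → E3) (x : E3) : ℝ :=
  ∑ j : Fin 3, fderiv ℝ v x (EuclideanSpace.single j 1) j

/-- The (correct) Onsager–Machlup functional of a Wiener process with drift `v` and
noise strength `σ`: `L(x,y) = ‖y - v(x)‖²/(2σ²) + (1/2)(div v)(x)`. -/
def OMLagrangian (σ : ℝ) (v : E3 → E3) (x y : E3) : ℝ :=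
  ‖y - v x‖ ^ 2 / (2 * σ ^ 2) + (1 / 2) * div3 v x

lemma div3_neg (v : E3 → E3) (x : E3) : div3 (fun x => -v x) x = -div3 v x := by
  simp [div3, fderiv_neg, ← Finset.sum_neg_distrib]

lemma div3_cont (v : E3 → E3) (hv : ContDiff ℝ 1 v) : Continuous (div3 v) := by
  have h := hv.continuous_fderiv one_ne_zero
  unfold div3
  fun_prop

/-- **Irreversibility of the Onsager–Machlup action.**
For a continuously differentiable drift field `v` and a continuously differentiable path
`s : [0,T] → ℝ³`, the action of the reversed path `s'(t) = s(T-t)` under the Lagrangian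
`L'` of the negated drift field `-v` equals the action of `s` under `L` minus the
integral of the divergence of `v` along the path. -/
theorem OM_action_reversal_divergence
    (σ : ℝ) (hσ : 0 < σ) (v : E3 → E3) (hv : ContDiff ℝ 1 v)
    (T : ℝ) (hT : 0 < T) (s : ℝ → E3) (hs : ContDiffOn ℝ 1 s (Set.Icc 0 T)) :
    (∫ t in (0:ℝ)..T,
        OMLagrangian σ (fun x => -v x) (s (T - t)) (deriv (fun u => s (T - u)) t)) =
    (∫ t in (0:ℝ)..T, OMLagrangian σ v (s t) (deriv s t)) -
      ∫ t in (0:ℝ)..T, div3 v (s t) := by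
  have hUD : UniqueDiffOn ℝ (Set.Icc (0:ℝ) T) := uniqueDiffOn_Icc hT
  set g : ℝ → E3 := derivWithin s (Set.Icc 0 T) with hgdef
  have hgc : ContinuousOn g (Set.Icc 0 T) := hs.continuousOn_derivWithin hUD le_rfl
  have hsc : ContinuousOn s (Set.Icc 0 T) := hs.continuousOn
  -- s has derivative g t at interior points
  have hds : ∀ t ∈ Set.Ioo (0:ℝ) T, HasDerivAt s (g t) t := by
    intro t ht
    have hmem : Set.Icc (0:ℝ) T ∈ nhds t := Icc_mem_nhds ht.1 ht.2
    have hd : HasDerivWithinAt s (g t) (Set.Icc 0 T) t :=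
      ((hs.differentiableOn one_ne_zero) t (Set.Ioo_subset_Icc_self ht)).hasDerivWithinAt
    exact hd.hasDerivAt hmem
  -- auxiliary continuous functions
  set G : ℝ → ℝ := fun t => ‖g t - v (s t)‖ ^ 2 / (2 * σ ^ 2) + (1/2) * div3 v (s t) with hGdef
  set D : ℝ → ℝ := fun t => div3 v (s t) with hDdef
  set F : ℝ → ℝ := fun t => G t - D t with hFdef
  have hDc : ContinuousOn D (Set.Icc 0 T) := ((div3_cont v hv).comp_continuousOn hsc)
  have hGc : ContinuousOn G (Set.Icc 0 T) := by
    apply ContinuousOn.add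
    · exact ((hgc.sub ((hv.continuous.comp_continuousOn hsc))).norm.pow 2).div_const _
    · exact continuousOn_const.mul hDc
  have huIcc : Set.uIcc (0:ℝ) T = Set.Icc 0 T := Set.uIcc_of_le hT.le
  have hDi : IntervalIntegrable D volume 0 T :=
    (hDc.mono huIcc.subset).intervalIntegrable
  have hGi : IntervalIntegrable G volume 0 T :=
    (hGc.mono huIcc.subset).intervalIntegrable
  -- a.e. equality on Ioc vs Ioo
  have haeIoo : ∀ᵐ t : ℝ ∂volume, t ∈ Set.Ioc (0:ℝ) T → t ∈ Set.Ioo (0:ℝ) T := by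
    have : (volume : Measure ℝ) {T} = 0 := measure_singleton T
    filter_upwards [measure_eq_zero_iff_ae_notMem.mp this] with t ht hti
    exact ⟨hti.1, lt_of_le_of_ne hti.2 (by intro h; exact ht (by simp [h]))⟩
  -- RHS first integral equals ∫ G
  have hR : (∫ t in (0:ℝ)..T, OMLagrangian σ v (s t) (deriv s t)) = ∫ t in (0:ℝ)..T, G t := by
    apply intervalIntegral.integral_congr_ae
    rw [Set.uIoc_of_le hT.le]
    filter_upwards [haeIoo] with t ht hti
    have ht' := ht hti
    rw [(hds t ht').deriv]
    rfl
  -- LHS equals ∫ F(T - t)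
  have hL : (∫ t in (0:ℝ)..T,
        OMLagrangian σ (fun x => -v x) (s (T - t)) (deriv (fun u => s (T - u)) t)) =
      ∫ t in (0:ℝ)..T, F (T - t) := by
    apply intervalIntegral.integral_congr_ae
    rw [Set.uIoc_of_le hT.le]
    filter_upwards [haeIoo] with t ht hti
    have ht' := ht hti
    have hTt : T - t ∈ Set.Ioo (0:ℝ) T := ⟨by linarith [ht'.2], by linarith [ht'.1]⟩
    have hrev : HasDerivAt (fun u => s (T - u)) (-(g (T - t))) t := by
      have h1 : HasDerivAt (fun u : ℝ => T - u) (-1) t := (hasDerivAt_id t).const_sub T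
      have := (hds (T - t) hTt).scomp t h1
      rw [neg_one_smul] at this
      exact this
    rw [hrev.deriv]
    show OMLagrangian σ (fun x => -v x) (s (T - t)) (-(g (T - t))) = F (T - t)
    simp only [OMLagrangian, hFdef, hGdef, hDdef, div3_neg]
    have : -g (T - t) - -v (s (T - t)) = -(g (T - t) - v (s (T - t))) := by abel
    rw [this, norm_neg]
    ring
  rw [hL, hR]
  have hrefl : (∫ t in (0:ℝ)..T, F (T - t)) = ∫ t in (0:ℝ)..T, F t := by
    simpa using intervalIntegral.integral_comp_sub_left F T (a := (0:ℝ)) (b := T)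
  rw [hrefl, hFdef]
  exact intervalIntegral.integral_sub hGi hDi
end
end

section
/- Let E be a real Banach space, A : E → E a continuous linear operator, κ ∈ ℝ, and f : [0,∞) → E differentiable with f′(t) = A f(t) for all t ≥ 0. Assume that T ↦ e^{κT} f(T) is Bochner integrable on [0,∞) and e^{κT} f(T) → 0 as T → ∞. Then (A + κ·Id)( ∫₀^∞ e^{κT} f(T) dT ) = −f(0); i.e., exponential reweighting of the propagator by e^{κT} corresponds to the spectral shift A ↦ A + κ of the generator. -/
open MeasureTheory Filter

/-- **Exponential reweighting corresponds to a spectral shift of the generator.**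
Let `E` be a real Banach space, `A : E → E` a continuous linear operator, `κ ∈ ℝ`,
and `f : [0,∞) → E` differentiable with `f' = A f` on `[0,∞)`. If `T ↦ e^{κT} f(T)`
is Bochner integrable on `[0,∞)` and `e^{κT} f(T) → 0` as `T → ∞`, then
`(A + κ·Id)(∫ T in Set.Ici 0, e^{κT} f(T) dT) = -f(0)`. -/
theorem exponential_reweighting_spectral_shift
    {E : Type*} [NormedAddCommGroup E] [NormedSpace ℝ E] [CompleteSpace E]
    (A : E →L[ℝ] E) (κ : ℝ) (f : ℝ → E)
    (hf : ∀ t ∈ Set.Ici (0 : ℝ), HasDerivWithinAt f (A (f t)) (Set.Ici 0) t)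
    (hint : IntegrableOn (fun T => Real.exp (κ * T) • f T) (Set.Ici 0))
    (hlim : Tendsto (fun T => Real.exp (κ * T) • f T) atTop (nhds 0)) :
    (A + κ • (1 : E →L[ℝ] E))
        (∫ T in Set.Ici (0 : ℝ), Real.exp (κ * T) • f T) = -f 0 := by
  set g : ℝ → E := fun T => Real.exp (κ * T) • f T with hg
  set B : E →L[ℝ] E := A + κ • (1 : E →L[ℝ] E) with hB
  -- derivative of g within Ici 0
  have hderiv : ∀ t ∈ Set.Ici (0 : ℝ), HasDerivWithinAt g (B (g t)) (Set.Ici 0) t := by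
    intro t ht
    have hc : HasDerivWithinAt (fun T => Real.exp (κ * T)) (κ * Real.exp (κ * t))
        (Set.Ici 0) t := by
      simpa [mul_comm, Function.comp_def] using ((Real.hasDerivAt_exp (κ * t)).comp t
        ((hasDerivAt_id t).const_mul κ)).hasDerivWithinAt
    have := hc.smul (hf t ht)
    convert this using 1
    · rfl
    simp [hB, hg, ContinuousLinearMap.add_apply, smul_smul, smul_add, mul_comm]

  -- B g is integrable
  have hBint : IntegrableOn (fun T => B (g T)) (Set.Ici 0) :=
    B.integrable_comp hint
  -- FTC on [0, ∞)
  have hFTC : ∫ T in Set.Ioi (0 : ℝ), B (g T) = (0 : E) - g 0 := by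
    apply integral_Ioi_of_hasDerivAt_of_tendsto
    · exact (hderiv 0 (Set.mem_Ici.mpr le_rfl)).continuousWithinAt
    · intro x hx
      exact (hderiv x (Set.mem_Ici.mpr (le_of_lt hx))).hasDerivAt (Ici_mem_nhds hx)
    · exact hBint.mono_set Set.Ioi_subset_Ici_self
    · exact hlim
  have h1 : B (∫ T in Set.Ici (0 : ℝ), g T) = ∫ T in Set.Ici (0 : ℝ), B (g T) :=
    (B.integral_comp_comm hint).symm
  rw [h1,
    MeasureTheory.integral_Ici_eq_integral_Ioi, hFTC]
  simp [hg]
end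

section
/- Let E be a real Hilbert space, H : E → E an invertible continuous linear operator, and Z : E → E a continuous linear operator with Z ∘ Z = Id, Z† = Z, and H ∘ Z = Z ∘ H†. Then the operator Z ∘ H⁻¹ is self-adjoint; consequently the connectivity measure c(a,b) = −⟨a, Z H⁻¹ b⟩ is symmetric: c(a,b) = c(b,a) for all a, b ∈ E. -/
open ContinuousLinearMap

/-- **Symmetry of the connectivity measure.**
Let `E` be a real Hilbert space, `H : E → E` an invertible continuous linear operator
(with inverse `G`), and `Z : E → E` a continuous linear operator with `Z ∘ Z = Id`,
`Z† = Z` and `H ∘ Z = Z ∘ H†`. Then `Z ∘ H⁻¹` is self-adjoint, and consequently the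
connectivity measure `c(a,b) = -⟨a, Z H⁻¹ b⟩` is symmetric: `c(a,b) = c(b,a)`. -/
theorem connectivity_measure_symmetric
    {E : Type*} [NormedAddCommGroup E] [InnerProductSpace ℝ E] [CompleteSpace E]
    (H G Z : E →L[ℝ] E)
    (hHG : H ∘L G = 1) (hGH : G ∘L H = 1)
    (hZZ : Z ∘L Z = 1) (hZsa : adjoint Z = Z)
    (hsym : H ∘L Z = Z ∘L adjoint H) :
    IsSelfAdjoint (Z ∘L G) ∧
      ∀ a b : E, -(inner ℝ a ((Z ∘L G) b) : ℝ) = -(inner ℝ b ((Z ∘L G) a) : ℝ) := by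
  -- adjoint inverse relations
  have hGH' : adjoint H ∘L adjoint G = 1 := by
    rw [← adjoint_comp, hGH]; simp [one_def, adjoint_id]
  -- Z = G ∘ Z ∘ H†
  have h1 : Z = G ∘L (Z ∘L adjoint H) := by
    calc Z = (G ∘L H) ∘L Z := by rw [hGH, one_def, id_comp]
    _ = G ∘L (H ∘L Z) := by rw [comp_assoc]
    _ = G ∘L (Z ∘L adjoint H) := by rw [hsym]
  -- Z ∘ G† = G ∘ Z
  have h2 : Z ∘L adjoint G = G ∘L Z := by
    calc Z ∘L adjoint G = (G ∘L (Z ∘L adjoint H)) ∘L adjoint G := by rw [← h1]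
    _ = G ∘L (Z ∘L (adjoint H ∘L adjoint G)) := by simp [comp_assoc]
    _ = G ∘L Z := by rw [hGH']; simp [one_def]
  -- G† ∘ Z = Z ∘ G (conjugate by Z)
  have h3 : adjoint G ∘L Z = Z ∘L G := by
    calc adjoint G ∘L Z = ((Z ∘L Z) ∘L adjoint G) ∘L Z := by
          rw [hZZ, one_def, id_comp]
    _ = Z ∘L ((Z ∘L adjoint G) ∘L Z) := by simp [comp_assoc]
    _ = Z ∘L ((G ∘L Z) ∘L Z) := by rw [h2]
    _ = (Z ∘L G) ∘L (Z ∘L Z) := by simp [comp_assoc]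
    _ = Z ∘L G := by rw [hZZ]; simp [one_def]
  have hsa : IsSelfAdjoint (Z ∘L G) := by
    rw [isSelfAdjoint_iff']
    rw [adjoint_comp, hZsa, h3]
  refine ⟨hsa, fun a b => ?_⟩
  have : (inner ℝ a ((Z ∘L G) b) : ℝ) = inner ℝ b ((Z ∘L G) a) := by
    rw [← adjoint_inner_left, hsa.adjoint_eq, real_inner_comm]
  rw [this]
end
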